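/- Let E be a nonzero Banach space and let a be a nonzero element of E. Then the set U_a := {⋆ ∈ Mltp(E) : ⋆ is unital and a is invertible in (E,⋆)} is open in Mltp(E) (with the topology induced by the operator norm on bounded bilinear operators), and the map ⋆ ↦ a⁻¹_⋆ from U_a to E is continuous. -/

import Mathlib

/-- The set of continuous multiplications on `E`: associative bounded bilinear operators
`E × E → E`, as a subtype of the space of bounded bilinear operators with the operator-norm
topology. -/
abbrev Mltp (E : Type*) [NormedAddCommGroup E] [NormedSpace ℝ E] :=
  {g : E →L[ℝ] E →L[ℝ] E // ∀ x y z : E, g (g x y) z = g x (g y z)}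

/-- `Ua E a` is the set of (unital) continuous multiplications `⋆` on `E` for which `a` is
invertible in `(E, ⋆)`. -/
def Ua (E : Type*) [NormedAddCommGroup E] [NormedSpace ℝ E] (a : E) : Set (Mltp E) :=
  {f : Mltp E | ∃ e : E, (∀ x : E, f.1 e x = x ∧ f.1 x e = x) ∧
    ∃ b : E, f.1 a b = e ∧ f.1 b a = e}

section Aux

variable {E : Type*} [NormedAddCommGroup E] [NormedSpace ℝ E]

/-- The explicit unit in `B(E)` given by left multiplication by `a`. -/
noncomputable def leftUnit {a : E} {f : Mltp E} (e b : E) (he : ∀ x : E, f.1 e x = x ∧ f.1 x e = x)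
    (hab : f.1 a b = e) (hba : f.1 b a = e) : (E →L[ℝ] E)ˣ where
  val := f.1 a
  inv := f.1 b
  val_inv := by
    ext x
    simp only [ContinuousLinearMap.mul_apply, ContinuousLinearMap.one_apply]
    rw [← f.2, hab, (he x).1]
  inv_val := by
    ext x
    simp only [ContinuousLinearMap.mul_apply, ContinuousLinearMap.one_apply]
    rw [← f.2, hba, (he x).1]

/-- The explicit unit in `B(E)` given by right multiplication by `a`. -/
noncomputable def rightUnit {a : E} {f : Mltp E} (e b : E) (he : ∀ x : E, f.1 e x = x ∧ f.1 x e = x)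
    (hab : f.1 a b = e) (hba : f.1 b a = e) : (E →L[ℝ] E)ˣ where
  val := f.1.flip a
  inv := f.1.flip b
  val_inv := by
    ext x
    simp only [ContinuousLinearMap.mul_apply, ContinuousLinearMap.one_apply,
      ContinuousLinearMap.flip_apply]
    rw [f.2, hba, (he x).2]
  inv_val := by
    ext x
    simp only [ContinuousLinearMap.mul_apply, ContinuousLinearMap.one_apply,
      ContinuousLinearMap.flip_apply]
    rw [f.2, hab, (he x).2]

lemma ua_isUnit {a : E} {f : Mltp E} (hf : f ∈ Ua E a) :
    IsUnit (f.1 a) ∧ IsUnit (f.1.flip a) := by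
  obtain ⟨e, he, b, hab, hba⟩ := hf
  exact ⟨⟨leftUnit e b he hab hba, rfl⟩, ⟨rightUnit e b he hab hba, rfl⟩⟩

lemma ua_of_isUnit {a : E} {f : Mltp E} (hu : IsUnit (f.1 a)) (hv : IsUnit (f.1.flip a)) :
    f ∈ Ua E a := by
  obtain ⟨u, hu⟩ := hu
  obtain ⟨v, hv⟩ := hv
  set ui : E →L[ℝ] E := ↑u⁻¹ with hui
  set vi : E →L[ℝ] E := ↑v⁻¹ with hvi
  -- cancellation lemmas
  have hLcancel : ∀ x : E, f.1 a (ui x) = x := fun x => by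
    have := congrArg (fun T : E →L[ℝ] E => T x) u.mul_inv
    simpa [hu] using this
  have hLcancel' : ∀ x : E, ui (f.1 a x) = x := fun x => by
    have := congrArg (fun T : E →L[ℝ] E => T x) u.inv_mul
    simpa [hu] using this
  have hRcancel : ∀ x : E, f.1 (vi x) a = x := fun x => by
    have := congrArg (fun T : E →L[ℝ] E => T x) v.mul_inv
    simpa [hv] using this
  have hRcancel' : ∀ x : E, vi (f.1 x a) = x := fun x => by
    have := congrArg (fun T : E →L[ℝ] E => T x) v.inv_mul
    simpa [hv] using this
  set e₁ : E := ui a with he₁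
  set e₂ : E := vi a with he₂
  have hae₁ : f.1 a e₁ = a := hLcancel a
  have he₂a : f.1 e₂ a = a := hRcancel a
  -- e₁ is a left unit
  have hleft : ∀ x : E, f.1 e₁ x = x := fun x => by
    have : f.1 a (f.1 e₁ x) = f.1 a x := by rw [← f.2, hae₁]
    have := congrArg (fun y => ui y) this
    simpa [hLcancel'] using this
  -- e₂ is a right unit
  have hright : ∀ x : E, f.1 x e₂ = x := fun x => by
    have : f.1 (f.1 x e₂) a = f.1 x a := by rw [f.2, he₂a]
    have := congrArg (fun y => vi y) this
    simpa [hRcancel'] using this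
  have he12 : e₁ = e₂ := by
    have h1 : f.1 e₁ e₂ = e₂ := hleft e₂
    have h2 : f.1 e₁ e₂ = e₁ := hright e₁
    rw [← h1, h2]
  have heunit : ∀ x : E, f.1 e₁ x = x ∧ f.1 x e₁ = x := fun x =>
    ⟨hleft x, by rw [he12]; exact hright x⟩
  set b : E := ui e₁ with hb
  set b' : E := vi e₁ with hb'
  have hab : f.1 a b = e₁ := hLcancel e₁
  have hb'a : f.1 b' a = e₁ := hRcancel e₁
  have hbb' : b = b' := by
    have h1 : f.1 e₁ b = b := hleft b
    have h2 : f.1 (f.1 b' a) b = f.1 b' (f.1 a b) := f.2 b' a b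
    rw [hb'a, hab] at h2
    rw [h1] at h2
    have h3 : f.1 b' e₁ = b' := (heunit b').2
    rw [h3] at h2
    exact h2
  exact ⟨e₁, heunit, b, hab, by rw [hbb']; exact hb'a⟩

lemma ua_iff {a : E} {f : Mltp E} :
    f ∈ Ua E a ↔ IsUnit (f.1 a) ∧ IsUnit (f.1.flip a) :=
  ⟨fun h => ua_isUnit h, fun ⟨h1, h2⟩ => ua_of_isUnit h1 h2⟩

/-- The inverse of `a` is given by a formula in terms of `Ring.inverse` applied to left
multiplication by `a`. -/
lemma inv_formula {a : E} {f : Mltp E} (e b : E)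
    (he : ∀ x : E, f.1 e x = x ∧ f.1 x e = x)
    (hab : f.1 a b = e) (hba : f.1 b a = e) :
    Ring.inverse (f.1 a) (Ring.inverse (f.1 a) a) = b := by
  have h : Ring.inverse (f.1 a) = f.1 b := by
    have := Ring.inverse_unit (leftUnit e b he hab hba)
    simpa [leftUnit] using this
  rw [h]
  show f.1 b (f.1 b a) = b
  rw [hba, (he b).2]

end Aux

/-- Let `E` be a nonzero Banach space and `a ≠ 0` in `E`.  The set
`U_a = {⋆ ∈ Mltp(E) : ⋆ unital and a invertible in (E,⋆)}` is open in `Mltp(E)`, and the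
map `⋆ ↦ a⁻¹_⋆` from `U_a` to `E` is continuous. -/
theorem stmt_14
    {E : Type*} [NormedAddCommGroup E] [NormedSpace ℝ E] [CompleteSpace E] [Nontrivial E]
    (a : E) (ha : a ≠ 0) :
    IsOpen (Ua E a) ∧
    ∀ (inv : {f : Mltp E // f ∈ Ua E a} → E),
      (∀ f : {f : Mltp E // f ∈ Ua E a},
        ∃ e : E, (∀ x : E, f.1.1 e x = x ∧ f.1.1 x e = x) ∧
          f.1.1 a (inv f) = e ∧ f.1.1 (inv f) a = e) →
      Continuous inv := by
  have hcont1 : Continuous fun f : Mltp E => f.1 a :=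
    ((ContinuousLinearMap.apply ℝ (E →L[ℝ] E) a).continuous).comp continuous_subtype_val
  have hcont2 : Continuous fun f : Mltp E => f.1.flip a :=
    (((ContinuousLinearMap.apply ℝ (E →L[ℝ] E) a).continuous).comp
      (ContinuousLinearMap.flipₗᵢ ℝ E E E).continuous).comp continuous_subtype_val
  constructor
  · have hset : Ua E a =
        ((fun f : Mltp E => f.1 a) ⁻¹' {T | IsUnit T}) ∩
        ((fun f : Mltp E => f.1.flip a) ⁻¹' {T | IsUnit T}) := by
      ext f
      exact ua_iff
    rw [hset]
    exact (Units.isOpen.preimage hcont1).inter (Units.isOpen.preimage hcont2)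
  · intro inv hinv
    have hinv_eq : inv = fun f : {f : Mltp E // f ∈ Ua E a} =>
        Ring.inverse (f.1.1 a) (Ring.inverse (f.1.1 a) a) := by
      funext f
      obtain ⟨e, he, hab, hba⟩ := hinv f
      exact (inv_formula e (inv f) he hab hba).symm
    rw [hinv_eq]
    rw [continuous_iff_continuousAt]
    intro f
    have hLa : Continuous fun g : {f : Mltp E // f ∈ Ua E a} => g.1.1 a :=
      hcont1.comp continuous_subtype_val
    obtain ⟨u, hu⟩ := (ua_isUnit f.2).1
    have hRinv : ContinuousAt (fun g : {f : Mltp E // f ∈ Ua E a} =>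
        Ring.inverse (g.1.1 a)) f := by
      have h0 : ContinuousAt Ring.inverse (f.1.1 a) := hu ▸ NormedRing.inverse_continuousAt u
      exact ContinuousAt.comp (f := fun g : {f : Mltp E // f ∈ Ua E a} => g.1.1 a) h0 hLa.continuousAt
    -- now apply: g ↦ (Ring.inverse (g a)) ((Ring.inverse (g a)) a)
    have happ : Continuous fun p : (E →L[ℝ] E) × E => p.1 p.2 :=
      isBoundedBilinearMap_apply.continuous
    have h1 : ContinuousAt (fun g : {f : Mltp E // f ∈ Ua E a} =>
        Ring.inverse (g.1.1 a) a) f := by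
      exact (happ.continuousAt).comp (hRinv.prodMk continuousAt_const)
    exact (happ.continuousAt).comp (hRinv.prodMk h1)
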